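/- (Theorem 5: final bang for the open system.) Let B, C be Hermitian d_S×d_S matrices, H_E Hermitian d_E×d_E, H_I Hermitian on ℂ^{d_S}⊗ℂ^{d_E}, H_tot(v) := (C + v(B−C))⊗I_E + H_I + I_S⊗H_E, and t_f > 0. Assume [H_I, C⊗I_E] = 0. Let ρ, p : [0,t_f] → (Hermitian matrices on ℂ^{d_S}⊗ℂ^{d_E}) be continuous, let s : [0,t_f] → [0,1], and suppose: (a) p(t_f) = −C⊗I_E; (b) there is a real constant λ > 0 with Re Tr(p(t)·(−i)[H_tot(s(t)), ρ(t)]) = λ for every t ∈ [0,t_f]; and (c) for every t ∈ [0,t_f] and every v ∈ [0,1], Re Tr(p(t)·(−i)[H_tot(v), ρ(t)]) ≤ λ. Then there exists ε > 0 such that s(t) = 1 for all t ∈ (t_f − ε, t_f]. -/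

import Mathlib

set_option maxHeartbeats 1000000


open Matrix
open scoped Kronecker

noncomputable section

namespace Stmt12

variable {dS dE : ℕ}

/-- The superoperator `K_X(ρ) = −i[X, ρ]` on the joint system–environment space. -/
def K (X ρ : Matrix (Fin dS × Fin dE) (Fin dS × Fin dE) ℂ) :
    Matrix (Fin dS × Fin dE) (Fin dS × Fin dE) ℂ :=
  (-Complex.I) • (X * ρ - ρ * X)

/-- The total Hamiltonian `H_tot(v) = (C + v(B−C))⊗I_E + H_I + I_S⊗H_E`. -/
def Htot (B C : Matrix (Fin dS) (Fin dS) ℂ) (HE : Matrix (Fin dE) (Fin dE) ℂ)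
    (HI : Matrix (Fin dS × Fin dE) (Fin dS × Fin dE) ℂ) (v : ℝ) :
    Matrix (Fin dS × Fin dE) (Fin dS × Fin dE) ℂ :=
  (C + (v : ℂ) • (B - C)) ⊗ₖ (1 : Matrix (Fin dE) (Fin dE) ℂ) + HI +
    (1 : Matrix (Fin dS) (Fin dS) ℂ) ⊗ₖ HE

lemma aux_cont {n : Type*} [Fintype n] [DecidableEq n] (D : Matrix n n ℂ) :
    Continuous fun x : Matrix n n ℂ × Matrix n n ℂ =>
      (Matrix.trace (x.1 * ((-Complex.I) • (D * x.2 - x.2 * D)))).re := by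
  apply Complex.continuous_re.comp
  apply Continuous.matrix_trace
  exact continuous_fst.matrix_mul
    (show Continuous fun x : Matrix n n ℂ × Matrix n n ℂ => (-Complex.I) • (D * x.2 - x.2 * D) from
      (show Continuous fun x : Matrix n n ℂ × Matrix n n ℂ => D * x.2 - x.2 * D from
      (continuous_const.matrix_mul continuous_snd).sub
      (continuous_snd.matrix_mul continuous_const)).const_smul (-Complex.I))

lemma aux_K_add_smul (X Y R : Matrix (Fin dS × Fin dE) (Fin dS × Fin dE) ℂ) (c : ℂ) :
    K (X + c • Y) R = K X R + c • K Y R := by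
  simp only [K, add_mul, mul_add, smul_mul_assoc, mul_smul_comm]
  module

lemma aux_Htot_eq (B C : Matrix (Fin dS) (Fin dS) ℂ) (HE : Matrix (Fin dE) (Fin dE) ℂ)
    (HI : Matrix (Fin dS × Fin dE) (Fin dS × Fin dE) ℂ) (v : ℝ) :
    Htot B C HE HI v = Htot B C HE HI 0
      + (v : ℂ) • ((B - C) ⊗ₖ (1 : Matrix (Fin dE) (Fin dE) ℂ)) := by
  simp only [Htot, Matrix.add_kronecker, Matrix.smul_kronecker, Complex.ofReal_zero,
    zero_smul, add_zero]
  abel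

lemma aux_trace_negK (M H R : Matrix (Fin dS × Fin dE) (Fin dS × Fin dE) ℂ)
    (hMH : M * H = H * M) : Matrix.trace ((-M) * K H R) = 0 := by
  have h1 : Matrix.trace (M * (H * R)) = Matrix.trace (M * (R * H)) := by
    rw [← mul_assoc, hMH, mul_assoc, Matrix.trace_mul_comm, ← mul_assoc]
  simp only [K, mul_smul_comm, Matrix.trace_smul, mul_sub, Matrix.trace_sub, neg_mul,
    Matrix.trace_neg, h1]
  simp

lemma aux_affine (B C : Matrix (Fin dS) (Fin dS) ℂ) (HE : Matrix (Fin dE) (Fin dE) ℂ)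
    (HI P R : _) (v : ℝ) :
    (Matrix.trace (P * K (Htot B C HE HI v) R)).re
      = (Matrix.trace (P * K (Htot B C HE HI 0) R)).re
        + v * (Matrix.trace (P * K ((B - C) ⊗ₖ (1 : Matrix (Fin dE) (Fin dE) ℂ)) R)).re := by
  rw [aux_Htot_eq, aux_K_add_smul, mul_add, mul_smul_comm, Matrix.trace_add, Matrix.trace_smul]
  simp [Complex.add_re, Complex.mul_re]

/-- **Theorem 5** (final bang for the open system): if `[H_I, C⊗I_E] = 0` and the PMP
conditions hold with an active final-time constraint (`λ > 0`) and terminal co-state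
`p(tf) = −C⊗I_E`, then `s ≡ 1` on a final interval `(tf − ε, tf]`. -/
theorem open_system_final_bang
    (B C : Matrix (Fin dS) (Fin dS) ℂ) (hB : B.IsHermitian) (hC : C.IsHermitian)
    (HE : Matrix (Fin dE) (Fin dE) ℂ) (hHE : HE.IsHermitian)
    (HI : Matrix (Fin dS × Fin dE) (Fin dS × Fin dE) ℂ) (hHI : HI.IsHermitian)
    (hcomm : HI * (C ⊗ₖ (1 : Matrix (Fin dE) (Fin dE) ℂ))
      = (C ⊗ₖ (1 : Matrix (Fin dE) (Fin dE) ℂ)) * HI)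
    (tf : ℝ) (htf : 0 < tf)
    (ρ p : ℝ → Matrix (Fin dS × Fin dE) (Fin dS × Fin dE) ℂ) (s : ℝ → ℝ)
    (hρcont : ContinuousOn ρ (Set.Icc 0 tf)) (hpcont : ContinuousOn p (Set.Icc 0 tf))
    (hρHerm : ∀ t ∈ Set.Icc (0 : ℝ) tf, (ρ t).IsHermitian)
    (hpHerm : ∀ t ∈ Set.Icc (0 : ℝ) tf, (p t).IsHermitian)
    (hsval : ∀ t ∈ Set.Icc (0 : ℝ) tf, s t ∈ Set.Icc (0 : ℝ) 1)
    -- (a) terminal condition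
    (hptf : p tf = -(C ⊗ₖ (1 : Matrix (Fin dE) (Fin dE) ℂ)))
    -- (b) the PMP control Hamiltonian is constant and equal to `λ > 0`
    (lam : ℝ) (hlam : 0 < lam)
    (hconst : ∀ t ∈ Set.Icc (0 : ℝ) tf,
      (Matrix.trace (p t * K (Htot B C HE HI (s t)) (ρ t))).re = lam)
    -- (c) the maximum condition
    (hmax : ∀ t ∈ Set.Icc (0 : ℝ) tf, ∀ v ∈ Set.Icc (0 : ℝ) 1,
      (Matrix.trace (p t * K (Htot B C HE HI v) (ρ t))).re ≤ lam) :
    ∃ ε > 0, ∀ t ∈ Set.Ioc (tf - ε) tf, s t = 1 := by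
  classical
  set M : Matrix (Fin dS × Fin dE) (Fin dS × Fin dE) ℂ :=
    C ⊗ₖ (1 : Matrix (Fin dE) (Fin dE) ℂ) with hM
  set D : Matrix (Fin dS × Fin dE) (Fin dS × Fin dE) ℂ :=
    (B - C) ⊗ₖ (1 : Matrix (Fin dE) (Fin dE) ℂ) with hD
  -- M commutes with Htot 0
  have hMH0 : M * Htot B C HE HI 0 = Htot B C HE HI 0 * M := by
    have h0 : Htot B C HE HI 0 = M + HI + (1 : Matrix (Fin dS) (Fin dS) ℂ) ⊗ₖ HE := by
      simp [Htot, hM]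
    have hME : M * ((1 : Matrix (Fin dS) (Fin dS) ℂ) ⊗ₖ HE)
        = ((1 : Matrix (Fin dS) (Fin dS) ℂ) ⊗ₖ HE) * M := by
      rw [hM, ← Matrix.mul_kronecker_mul, ← Matrix.mul_kronecker_mul]
      simp
    rw [h0, mul_add, mul_add, add_mul, add_mul, hcomm, hME]
  -- the two coordinate functions
  set f : ℝ → ℝ := fun t => (Matrix.trace (p t * K (Htot B C HE HI 0) (ρ t))).re with hf
  set g : ℝ → ℝ := fun t => (Matrix.trace (p t * K D (ρ t))).re with hg
  have haff : ∀ t v, (Matrix.trace (p t * K (Htot B C HE HI v) (ρ t))).re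
      = f t + v * g t := fun t v => aux_affine B C HE HI (p t) (ρ t) v
  have htfmem : tf ∈ Set.Icc (0 : ℝ) tf := ⟨htf.le, le_refl _⟩
  -- f tf = 0
  have hftf : f tf = 0 := by
    rw [hf]; simp only
    rw [hptf, aux_trace_negK _ _ _ hMH0]
    simp
  -- g tf ≥ lam > 0
  have hstf := hsval tf htfmem
  have hc := hconst tf htfmem
  rw [haff, hftf, zero_add] at hc
  have hgtf : lam ≤ g tf := by
    have h1 := hmax tf htfmem 1 ⟨zero_le_one, le_refl 1⟩
    rw [haff, hftf] at h1
    rcases le_or_gt 0 (g tf) with hge | hlt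
    · have := mul_le_mul_of_nonneg_right hstf.2 hge
      nlinarith
    · have : s tf * g tf ≤ 0 := mul_nonpos_of_nonneg_of_nonpos hstf.1 hlt.le
      nlinarith
  -- continuity of g
  have hgc : ContinuousOn g (Set.Icc 0 tf) := by
    have h := (aux_cont D).comp_continuousOn (hpcont.prodMk hρcont)
    simp only [hg, K]
    exact h
  -- g stays positive near tf
  have hcw : ContinuousWithinAt g (Set.Icc 0 tf) tf := hgc tf htfmem
  have hpos : {t | 0 < g t} ∈ nhdsWithin tf (Set.Icc 0 tf) := by
    have : Set.Ioi (0 : ℝ) ∈ nhds (g tf) := Ioi_mem_nhds (lt_of_lt_of_le hlam hgtf)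
    exact hcw this
  rw [Metric.mem_nhdsWithin_iff] at hpos
  obtain ⟨ε, hε, hball⟩ := hpos
  refine ⟨min ε tf, lt_min hε htf, fun t ht => ?_⟩
  have ht1 : tf - min ε tf < t := ht.1
  have ht2 : t ≤ tf := ht.2
  have htmem : t ∈ Set.Icc (0 : ℝ) tf := by
    constructor
    · have : tf - min ε tf ≥ 0 := by
        have := min_le_right ε tf; linarith
      linarith
    · exact ht2
  have htball : t ∈ Metric.ball tf ε := by
    rw [Metric.mem_ball, Real.dist_eq, abs_of_nonpos (by linarith)]
    have := min_le_left ε tf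
    linarith
  have hgt : 0 < g t := hball ⟨htball, htmem⟩
  have hct := hconst t htmem
  rw [haff] at hct
  have hm1 := hmax t htmem 1 ⟨zero_le_one, le_refl 1⟩
  rw [haff] at hm1
  have hs := hsval t htmem
  nlinarith [hs.1, hs.2]


end Stmt12
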